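/- Expected number of distinct ancestors: Let L, N, M, k be positive integers with N = k·M and N ∣ L. Let f : Fin L → Fin N be a balanced map, i.e., every fiber f⁻¹(y) has exactly L/N elements. Let S₁, …, S_k be independent random finite subsets of Fin L, each uniformly distributed over the collection of all M-element subsets of Fin L. Then the expected cardinality of the image f(S₁ ∪ ⋯ ∪ S_k) is at least (1 − 1/e)·N, where e is Euler's number. -/

import Mathlib

open MeasureTheory ProbabilityTheory
open scoped ENNReal

lemma descFact_ineq (M : ℕ) : ∀ a b : ℕ, a ≤ b →
    a.descFactorial M * b ^ M ≤ b.descFactorial M * a ^ M := by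
  induction M with
  | zero => simp
  | succ M ih =>
    intro a b hab
    rw [Nat.descFactorial_succ, Nat.descFactorial_succ, pow_succ, pow_succ]
    have h1 : (a - M) * b ≤ (b - M) * a := by
      rcases le_total a M with h | h
      · simp [Nat.sub_eq_zero_of_le h]
      · rw [Nat.sub_mul, Nat.sub_mul, Nat.mul_comm a b]
        exact Nat.sub_le_sub_left (Nat.mul_le_mul_left M hab) _
    calc (a - M) * a.descFactorial M * (b ^ M * b)
        = ((a - M) * b) * (a.descFactorial M * b ^ M) := by ring
      _ ≤ ((b - M) * a) * (b.descFactorial M * a ^ M) := Nat.mul_le_mul h1 (ih a b hab)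
      _ = (b - M) * b.descFactorial M * (a ^ M * a) := by ring

lemma choose_ineq (M a b : ℕ) (hab : a ≤ b) :
    a.choose M * b ^ M ≤ b.choose M * a ^ M := by
  have h := descFact_ineq M a b hab
  rw [Nat.descFactorial_eq_factorial_mul_choose, Nat.descFactorial_eq_factorial_mul_choose,
    mul_assoc, mul_assoc] at h
  exact Nat.le_of_mul_le_mul_left h (Nat.factorial_pos M)

/-- Expected number of distinct ancestors collected by independent uniform
M-element subsets under a balanced map is at least (1 - 1/e)·N. -/
theorem expected_distinct_ancestors {Ω : Type} [MeasurableSpace Ω]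
    (μ : Measure Ω) [IsProbabilityMeasure μ]
    (L N M k : ℕ) (hL : 0 < L) (hN : 0 < N) (hM : 0 < M) (hk : 0 < k)
    (hNk : N = k * M) (hdvd : N ∣ L)
    (f : Fin L → Fin N)
    (hbal : ∀ y : Fin N, (Finset.univ.filter fun x => f x = y).card = L / N)
    [MeasurableSpace (Finset (Fin L))] [MeasurableSingletonClass (Finset (Fin L))]
    (S : Fin k → Ω → Finset (Fin L))
    (hmeas : ∀ i, Measurable (S i))
    (hindep : iIndepFun S μ)
    (hunif : ∀ i, μ.map (S i) = uniformOn {s : Finset (Fin L) | s.card = M}) :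
    (1 - (Real.exp 1)⁻¹) * N ≤
      ∫ ω, (((Finset.univ.biUnion fun i => S i ω).image f).card : ℝ) ∂μ := by
  classical
  -- all subsets of the countable space `Finset (Fin L)` are measurable
  have hall : ∀ B : Set (Finset (Fin L)), MeasurableSet B := fun B =>
    (Set.to_countable B).measurableSet
  set m : ℕ := L / N with hm
  have hmN : m * N = L := Nat.div_mul_cancel hdvd
  have hNL : N ≤ L := Nat.le_of_dvd hL hdvd
  have hML : M ≤ L := le_trans (by nlinarith [hNk]) hNL
  -- the "miss" event for color y
  set G : Fin N → Set (Finset (Fin L)) := fun y => {s | ∀ x ∈ s, f x ≠ y} with hG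
  set A : Fin N → Set Ω := fun y => ⋃ i, S i ⁻¹' (G y)ᶜ with hA
  have hAmeas : ∀ y, MeasurableSet (A y) := fun y =>
    MeasurableSet.iUnion fun i => (hmeas i) (hall _)
  set T : Set (Finset (Fin L)) := {s : Finset (Fin L) | s.card = M} with hT
  -- count computations
  have hTcount : Measure.count T = (Nat.choose L M : ℝ≥0∞) := by
    have : T = ↑(Finset.powersetCard M (Finset.univ : Finset (Fin L))) := by
      ext s; simp [hT, Finset.mem_powersetCard_univ]
    rw [this, Measure.count_apply_finset, Finset.card_powersetCard]
    simp
  have hTGcount : ∀ y, Measure.count (T ∩ G y) = (Nat.choose (L - m) M : ℝ≥0∞) := by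
    intro y
    have hcompl : ((Finset.univ.filter fun x => f x = y)ᶜ : Finset (Fin L)).card = L - m := by
      rw [Finset.card_compl, hbal y]; simp
    have : T ∩ G y = ↑(Finset.powersetCard M ((Finset.univ.filter fun x => f x = y)ᶜ)) := by
      ext s
      simp only [Set.mem_inter_iff, Set.mem_setOf_eq, hT, hG, Finset.mem_coe,
        Finset.mem_powersetCard]
      constructor
      · rintro ⟨h1, h2⟩
        refine ⟨fun x hx => ?_, h1⟩
        simp only [Finset.mem_compl, Finset.mem_filter, Finset.mem_univ, true_and]
        exact h2 x hx
      · rintro ⟨h1, h2⟩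
        refine ⟨h2, fun x hx => ?_⟩
        have := h1 hx
        simpa using this
    rw [this, Measure.count_apply_finset, Finset.card_powersetCard, hcompl]
  -- individual miss probability
  have hq : ∀ y, ∀ i, μ (S i ⁻¹' G y) =
      ((Nat.choose L M : ℝ≥0∞))⁻¹ * (Nat.choose (L - m) M : ℝ≥0∞) := by
    intro y i
    rw [← Measure.map_apply (hmeas i) (hall _), hunif i, uniformOn,
      cond_apply (hall T), hTcount, hTGcount y]
  -- complement of A y
  have hAc : ∀ y, (A y)ᶜ = ⋂ i, S i ⁻¹' G y := by
    intro y
    simp [hA, Set.compl_iUnion]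
  have hprod : ∀ y, μ ((A y)ᶜ) =
      (((Nat.choose L M : ℝ≥0∞))⁻¹ * (Nat.choose (L - m) M : ℝ≥0∞)) ^ k := by
    intro y
    rw [hAc y]
    have h1 : (⋂ i, S i ⁻¹' G y) = ⋂ i ∈ Finset.univ, S i ⁻¹' G y := by simp
    rw [h1, hindep.measure_inter_preimage_eq_mul Finset.univ
      (sets := fun _ => G y) (fun i _ => hall _)]
    simp [hq y, Finset.prod_const]
  -- real-valued miss probability
  set p : ℝ := (Nat.choose (L - m) M : ℝ) / (Nat.choose L M : ℝ) with hp
  have hchoosepos : 0 < (Nat.choose L M : ℝ) := by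
    exact_mod_cast Nat.choose_pos hML
  have hp_nonneg : 0 ≤ p := div_nonneg (by positivity) hchoosepos.le
  have hμAc : ∀ y, (μ ((A y)ᶜ)).toReal = p ^ k := by
    intro y
    rw [hprod y]
    rw [ENNReal.toReal_pow, ENNReal.toReal_mul, ENNReal.toReal_inv]
    simp [hp, div_eq_inv_mul]
  -- the key probability bound
  have hNR : (0:ℝ) < N := by exact_mod_cast hN
  have hLR : (0:ℝ) < L := by exact_mod_cast hL
  have hmcast : (m : ℝ) * N = L := by exact_mod_cast hmN
  have hmLR : ((L - m : ℕ) : ℝ) / L = 1 - 1 / N := by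
    have hmL : m ≤ L := Nat.div_le_self L N
    rw [Nat.cast_sub hmL, sub_div, div_self hLR.ne']
    congr 1
    rw [div_eq_div_iff hLR.ne' hNR.ne']
    linarith [hmcast]
  have hpbound : p ≤ (1 - 1 / N) ^ M := by
    have h := choose_ineq M (L - m) L (Nat.sub_le L m)
    have hR : ((L - m).choose M : ℝ) * (L : ℝ) ^ M ≤ (L.choose M : ℝ) * ((L - m : ℕ) : ℝ) ^ M := by
      exact_mod_cast h
    rw [← hmLR, div_pow]
    rw [hp, div_le_div_iff₀ hchoosepos (by positivity)]
    calc ((L - m).choose M : ℝ) * (L:ℝ)^M ≤ (L.choose M : ℝ) * ((L - m : ℕ) : ℝ) ^ M := hR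
      _ = ((L - m : ℕ) : ℝ) ^ M * (L.choose M : ℝ) := by ring
  have hone_sub_nonneg : (0:ℝ) ≤ 1 - 1 / N := by
    have : (1:ℝ) / N ≤ 1 := by
      rw [div_le_one hNR]; exact_mod_cast hN
    linarith
  have hexp : (1 - 1 / (N:ℝ)) ^ N ≤ (Real.exp 1)⁻¹ := by
    have h1 : (1 - 1 / (N:ℝ)) ≤ Real.exp (-(1/N)) := by
      have := Real.add_one_le_exp (-(1/(N:ℝ)))
      linarith
    calc (1 - 1 / (N:ℝ)) ^ N ≤ (Real.exp (-(1/N))) ^ N :=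
          pow_le_pow_left₀ hone_sub_nonneg h1 N
      _ = Real.exp ((N : ℝ) * (-(1/N))) := by rw [← Real.exp_nat_mul]
      _ = Real.exp (-1) := by
          congr 1
          field_simp
      _ = (Real.exp 1)⁻¹ := Real.exp_neg 1
  have hpk : p ^ k ≤ (Real.exp 1)⁻¹ := by
    calc p ^ k ≤ ((1 - 1 / (N:ℝ)) ^ M) ^ k := pow_le_pow_left₀ hp_nonneg hpbound k
      _ = (1 - 1 / (N:ℝ)) ^ (M * k) := by rw [← pow_mul]
      _ = (1 - 1 / (N:ℝ)) ^ N := by rw [hNk, Nat.mul_comm]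
      _ ≤ (Real.exp 1)⁻¹ := hexp
  -- probability of A y
  have hμA : ∀ y, 1 - (Real.exp 1)⁻¹ ≤ (μ (A y)).toReal := by
    intro y
    have hcm : μ (A y) = 1 - μ ((A y)ᶜ) := by
      rw [← prob_compl_eq_one_sub (hAmeas y).compl, compl_compl]
    have hle1 : μ ((A y)ᶜ) ≤ 1 := prob_le_one
    rw [hcm, ENNReal.toReal_sub_of_le hle1 ENNReal.one_ne_top, ENNReal.toReal_one, hμAc y]
    linarith [hpk]
  -- rewrite the integrand as a sum of indicators
  have hcard : ∀ ω, (((Finset.univ.biUnion fun i => S i ω).image f).card : ℝ) =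
      ∑ y : Fin N, Set.indicator (A y) (fun _ => (1:ℝ)) ω := by
    intro ω
    have hmem : ∀ y : Fin N,
        (y ∈ (Finset.univ.biUnion fun i => S i ω).image f) ↔ ω ∈ A y := by
      intro y
      simp only [Finset.mem_image, Finset.mem_biUnion, Finset.mem_univ, true_and,
        hA, Set.mem_iUnion, Set.mem_preimage, Set.mem_compl_iff, hG, Set.mem_setOf_eq]
      push_neg
      constructor
      · rintro ⟨x, ⟨i, hx⟩, hfx⟩; exact ⟨i, x, hx, hfx⟩
      · rintro ⟨i, x, hx, hfx⟩; exact ⟨x, ⟨i, hx⟩, hfx⟩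
    calc (((Finset.univ.biUnion fun i => S i ω).image f).card : ℝ)
        = ∑ y : Fin N, (if y ∈ (Finset.univ.biUnion fun i => S i ω).image f
            then (1:ℝ) else 0) := by
          rw [Finset.sum_ite_mem, Finset.univ_inter, Finset.sum_const, nsmul_eq_mul, mul_one]
      _ = ∑ y : Fin N, Set.indicator (A y) (fun _ => (1:ℝ)) ω :=
          Finset.sum_congr rfl fun y _ => by
            rw [Set.indicator_apply]
            simp [hmem y]
  -- conclude
  have hint : ∫ ω, (((Finset.univ.biUnion fun i => S i ω).image f).card : ℝ) ∂μ =
      ∑ y : Fin N, (μ (A y)).toReal := by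
    rw [integral_congr_ae (Filter.Eventually.of_forall hcard)]
    rw [integral_finset_sum]
    · refine Finset.sum_congr rfl fun y _ => ?_
      rw [integral_indicator_const (1:ℝ) (hAmeas y)]
      simp
      rfl
    · intro y _
      exact (integrable_const (1:ℝ)).indicator (hAmeas y)
  rw [hint]
  calc (1 - (Real.exp 1)⁻¹) * N = ∑ _y : Fin N, (1 - (Real.exp 1)⁻¹) := by
        rw [Finset.sum_const]; simp [mul_comm]
    _ ≤ ∑ y : Fin N, (μ (A y)).toReal := Finset.sum_le_sum fun y _ => hμA y
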